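/- Fix γ > 0. Let (λ^t) be a real sequence with λ^1 ≥ −2γ and updates λ^{t+1} = λ^t − γΔλ^t, where Δλ^t = B^t − C^t if B^t > C^t; Δλ^t = max{N^t − α, B^t − C^t} if B^t ≤ C^t and λ^t ≥ −γ; and Δλ^t = 0 if B^t ≤ C^t and λ^t < −γ. Assume B^t ∈ [0,1], C^t ≥ 0, N^t ∈ [0,1], α ∈ [0,1], and additionally B^t = 0 whenever λ^t < 0. Then λ^t ≥ −2γ for all t ≥ 1. -/
import Mathlib


theorem stmt3 (γ α : ℝ) (lam Δ B C N : ℕ → ℝ)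
    (hγ : 0 < γ) (hα0 : 0 ≤ α) (hα1 : α ≤ 1)
    (hinit : lam 1 ≥ -(2 * γ))
    (hupd : ∀ t, 1 ≤ t → lam (t + 1) = lam t - γ * Δ t)
    (hΔ1 : ∀ t, 1 ≤ t → B t > C t → Δ t = B t - C t)
    (hΔ2 : ∀ t, 1 ≤ t → B t ≤ C t → lam t ≥ -γ → Δ t = max (N t - α) (B t - C t))
    (hΔ3 : ∀ t, 1 ≤ t → B t ≤ C t → lam t < -γ → Δ t = 0)
    (hB : ∀ t, 1 ≤ t → B t ∈ Set.Icc (0 : ℝ) 1)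
    (hC : ∀ t, 1 ≤ t → 0 ≤ C t)
    (hN : ∀ t, 1 ≤ t → N t ∈ Set.Icc (0 : ℝ) 1)
    (hB0 : ∀ t, 1 ≤ t → lam t < 0 → B t = 0) :
    ∀ t, 1 ≤ t → lam t ≥ -(2 * γ) := by
  intro t ht
  induction t, ht using Nat.le_induction with
  | base => exact hinit
  | succ t ht ih =>
    obtain ⟨hB0t, hB1t⟩ := hB t ht
    obtain ⟨hN0t, hN1t⟩ := hN t ht
    have hCt := hC t ht
    rw [hupd t ht]
    by_cases hl : lam t ≥ -γ
    · have hΔle : Δ t ≤ 1 := by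
        by_cases hbc : B t > C t
        · rw [hΔ1 t ht hbc]; linarith
        · push_neg at hbc
          rw [hΔ2 t ht hbc hl]
          exact max_le (by linarith) (by linarith)
      nlinarith
    · push_neg at hl
      have hB0' : B t = 0 := hB0 t ht (by linarith)
      rw [hΔ3 t ht (by linarith) hl]
      linarith
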